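/- Let p be a probability distribution on a finite set S, let q be a probability distribution with D_KL(q||p) ≤ δ, and suppose δ ≤ p_min/(8m²) where m ≥ 1 is an integer and p_min = min{p(s) : p(s) > 0}. Then for every s with p(s) > 0, q(s) ≥ (1 - 1/(2m))·p(s). -/

import Mathlib

open Real

private lemma key_deriv {x : ℝ} (hx : 0 < x) :
    HasDerivAt (fun x : ℝ => x * Real.log x - x + 1 - (1-x)^2/2)
      (Real.log x + 1 - x) x := by
  have h1 : HasDerivAt (fun x : ℝ => x * Real.log x) (Real.log x + 1) x := by
    have := (hasDerivAt_id x).mul (Real.hasDerivAt_log hx.ne')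
    refine this.congr_deriv ?_
    simp [hx.ne']
  have h2 : HasDerivAt (fun x : ℝ => (1-x)^2/2) (x - 1) x := by
    have := (((hasDerivAt_const x (1:ℝ)).sub (hasDerivAt_id x)).pow 2).div_const 2
    refine this.congr_deriv ?_
    simp only [Pi.sub_apply, id_eq]; push_cast; ring
  have := ((h1.sub (hasDerivAt_id x)).add_const 1).sub h2
  refine this.congr_deriv ?_
  ring

private lemma key_ineq {x : ℝ} (hx0 : 0 < x) (hx1 : x ≤ 1) :
    (1 - x)^2 / 2 ≤ x * Real.log x - x + 1 := by
  set h : ℝ → ℝ := fun x => x * Real.log x - x + 1 - (1-x)^2/2 with hh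
  have hanti : AntitoneOn h (Set.Ioi 0) := by
    apply antitoneOn_of_deriv_nonpos (convex_Ioi 0)
    · apply ContinuousOn.sub
      · apply ContinuousOn.add
        · apply ContinuousOn.sub
          · exact continuousOn_id.mul (Real.continuousOn_log.mono
              (fun x hx => ne_of_gt hx))
          · exact continuousOn_id
        · exact continuousOn_const
      · exact (((continuousOn_const.sub continuousOn_id).pow 2).div_const 2)
    · intro x hx
      rw [interior_Ioi] at hx
      exact (key_deriv hx).differentiableAt.differentiableWithinAt
    · intro x hx
      rw [interior_Ioi] at hx
      rw [(key_deriv hx).deriv]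
      have := Real.log_le_sub_one_of_pos hx
      linarith
  have h1 : h 1 = 0 := by simp [hh]
  have := hanti (Set.mem_Ioi.2 hx0) (Set.mem_Ioi.2 one_pos) hx1
  rw [h1] at this
  simpa [hh] using this

/-- If `D_KL(q‖p) ≤ δ ≤ p_min/(8 m²)` then `q(s) ≥ (1 - 1/(2m)) p(s)` on the support of `p`. -/
theorem stmt_4 {S : Type*} [Fintype S] (p q : S → ℝ) (pmin δ : ℝ) (m : ℕ)
    (hp0 : ∀ s, 0 ≤ p s) (hp1 : ∑ s, p s = 1)
    (hq0 : ∀ s, 0 ≤ q s) (hq1 : ∑ s, q s = 1)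
    (hac : ∀ s, p s = 0 → q s = 0)
    (hpmin : IsLeast {x : ℝ | ∃ s, 0 < p s ∧ p s = x} pmin)
    (hm : 1 ≤ m)
    (hKL : ∑ s, q s * Real.log (q s / p s) ≤ δ)
    (hδ : δ ≤ pmin / (8 * (m : ℝ) ^ 2)) :
    ∀ s, 0 < p s → q s ≥ (1 - 1 / (2 * (m : ℝ))) * p s := by
  intro s hps
  have hm1 : (1:ℝ) ≤ (m:ℝ) := by exact_mod_cast hm
  have hm0 : (0:ℝ) < (m:ℝ) := by linarith
  -- pmin facts
  have hpmin_le : pmin ≤ p s := hpmin.2 ⟨s, hps, rfl⟩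
  set F : S → ℝ := fun t => q t * Real.log (q t / p t) - q t + p t with hF
  have hFsum : ∑ t, F t ≤ δ := by
    have : ∑ t, F t = ∑ t, q t * Real.log (q t / p t) - (∑ t, q t) + ∑ t, p t := by
      rw [hF]; rw [Finset.sum_add_distrib, Finset.sum_sub_distrib]
    rw [this, hq1, hp1]; linarith
  have hFnonneg : ∀ t, 0 ≤ F t := by
    intro t
    rcases eq_or_lt_of_le (hp0 t) with hpt | hpt
    · have hqt := hac t hpt.symm
      simp [hF, hqt, ← hpt]
    rcases eq_or_lt_of_le (hq0 t) with hqt | hqt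
    · simp [hF, ← hqt]
      linarith
    · have h1 : Real.log (p t / q t) ≤ p t / q t - 1 :=
        Real.log_le_sub_one_of_pos (div_pos hpt hqt)
      have h2 : Real.log (q t / p t) = - Real.log (p t / q t) := by
        rw [← Real.log_inv]
        congr 1
        field_simp
      have h3 : 1 - p t / q t ≤ Real.log (q t / p t) := by rw [h2]; linarith
      have h4 : q t * (1 - p t / q t) ≤ q t * Real.log (q t / p t) :=
        mul_le_mul_of_nonneg_left h3 (le_of_lt hqt)
      have h5 : q t * (1 - p t / q t) = q t - p t := by field_simp
      simp only [hF]
      linarith [h4, h5 ▸ h4]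
  -- reduce to the single term at s
  have hFs : F s ≤ δ := by
    calc F s ≤ ∑ t, F t := Finset.single_le_sum (fun t _ => hFnonneg t) (Finset.mem_univ s)
    _ ≤ δ := hFsum
  set a := q s with ha
  set b := p s with hb
  by_cases hab : b ≤ a
  · have : (1 - 1 / (2 * (m:ℝ))) * b ≤ b := by
      have h1 : (0:ℝ) < 1 / (2 * (m:ℝ)) := by positivity
      nlinarith
    linarith
  push_neg at hab
  -- key quadratic bound: (b-a)^2/(2b) ≤ F s
  have hkey : (b - a)^2 / (2 * b) ≤ F s := by
    rcases eq_or_lt_of_le (hq0 s) with hqs | hqs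
    · have hFs0 : F s = b := by simp [hF, ← hqs, ← ha]; exact hb.symm
      have haz : a = 0 := ha.trans hqs.symm
      rw [hFs0, haz]
      rw [div_le_iff₀ (by linarith)]
      nlinarith
    · have hu0 : 0 < a / b := div_pos hqs hps
      have hu1 : a / b ≤ 1 := by
        rw [div_le_one hps]; linarith
      have := key_ineq hu0 hu1
      have hbpos : (0:ℝ) < b := hps
      have hmul := mul_le_mul_of_nonneg_left this (le_of_lt hbpos)
      have hFseq : F s = b * (a / b * Real.log (a / b) - a / b + 1) := by
        simp only [hF]
        field_simp
        rfl
      have hleft : b * ((1 - a/b)^2 / 2) = (b - a)^2 / (2 * b) := by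
        field_simp
      rw [hFseq]
      rw [← hleft]
      exact hmul
  -- combine
  have hpminpos : 0 < pmin := by
    obtain ⟨s0, hs0, hs0'⟩ := hpmin.1
    linarith
  have hδb : δ ≤ b / (8 * (m:ℝ)^2) := by
    calc δ ≤ pmin / (8 * (m:ℝ)^2) := hδ
    _ ≤ b / (8 * (m:ℝ)^2) := by gcongr
  have hsq : (b - a)^2 ≤ b^2 / (4 * (m:ℝ)^2) := by
    have h1 : (b - a)^2 / (2*b) ≤ b / (8 * (m:ℝ)^2) := le_trans hkey (le_trans hFs hδb)
    have hbpos : (0:ℝ) < b := hps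
    rw [div_le_div_iff₀ (by linarith) (by positivity)] at h1
    rw [le_div_iff₀ (by positivity)]
    nlinarith
  -- conclude
  have hstep : b - a ≤ b / (2 * (m:ℝ)) := by
    have hbpos : (0:ℝ) < b := hps
    have hsq' : (b - a)^2 ≤ (b / (2*(m:ℝ)))^2 := by
      rw [div_pow]
      convert hsq using 2
      ring
    have h := Real.sqrt_le_sqrt hsq'
    rwa [Real.sqrt_sq (by linarith), Real.sqrt_sq (by positivity)] at h
  have : (1 - 1 / (2 * (m:ℝ))) * b = b - b / (2*(m:ℝ)) := by ring
  rw [ge_iff_le, this]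
  linarith
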